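/- arXiv:2409.15225 — 2 statements merged into one kernel-verified Lean document; each statement's English description precedes it below -/
import Mathlib

section
/- Let μ > 0 be a non-integer real number and let p ∈ V_μ. Then W1(p, p*) ≤ 2 max{ ∑_{n ≤ ⌊μ⌋} (⌊μ⌋+1−n) p_n − (⌊μ⌋+1−μ) , ∑_{n ≤ ⌊μ⌋} (⌊μ⌋−n) p_n }, where p* is the shifted Bernoulli distribution with mean μ. -/
/-- Cumulative distribution function of a pmf on ℕ: `F n = ∑_{m ≤ n} p m`. -/
noncomputable def cdf (p : ℕ → ℝ) (n : ℕ) : ℝ := ∑ m ∈ Finset.range (n + 1), p m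

/-- Wasserstein-1 distance between two pmfs on ℕ, `W1(p,q) = ∑_{n ≥ 0} |F_n - H_n|`. -/
noncomputable def W1 (p q : ℕ → ℝ) : ℝ := ∑' n : ℕ, |cdf p n - cdf q n|

/-- Gini index of a pmf on ℕ with mean μ: `G[p] = (1/(2μ)) ∑_i ∑_j |i-j| p_i p_j`. -/
noncomputable def Gini (μ : ℝ) (p : ℕ → ℝ) : ℝ :=
  (1 / (2 * μ)) * ∑' i : ℕ, ∑' j : ℕ, |(i : ℝ) - (j : ℝ)| * p i * p j

/-- The shifted Bernoulli distribution with mean μ: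
`p*_{⌊μ⌋} = 1 - μ + ⌊μ⌋`, `p*_{⌊μ⌋+1} = μ - ⌊μ⌋`, `p*_n = 0` otherwise. -/
noncomputable def pstar (μ : ℝ) : ℕ → ℝ := fun n =>
  if n = ⌊μ⌋₊ then 1 - μ + (⌊μ⌋₊ : ℝ)
  else if n = ⌊μ⌋₊ + 1 then μ - (⌊μ⌋₊ : ℝ)
  else 0

/-- The Dirac distribution on ℕ concentrated at `k`. -/
noncomputable def dirac (k : ℕ) : ℕ → ℝ := fun n => if n = k then 1 else 0

/-- Finite swap: `∑_{n<N} F_n = ∑_{m<N} (N-m) p_m`. -/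
lemma sum_cdf (p : ℕ → ℝ) (N : ℕ) :
    ∑ n ∈ Finset.range N, cdf p n = ∑ m ∈ Finset.range N, ((N : ℝ) - (m : ℝ)) * p m := by
  induction N with
  | zero => simp
  | succ N ih =>
    have h : ∀ m ∈ Finset.range (N + 1),
        (((N : ℝ) + 1) - (m : ℝ)) * p m = ((N : ℝ) - (m : ℝ)) * p m + p m := by
      intro m _; ring
    rw [Finset.sum_range_succ, ih]
    push_cast
    rw [Finset.sum_congr rfl h, Finset.sum_add_distrib,
      Finset.sum_range_succ (fun m => ((N : ℝ) - (m : ℝ)) * p m)]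
    simp [cdf]

theorem stmt_14 (μ : ℝ) (hμ : 0 < μ) (hni : ∀ n : ℕ, μ ≠ (n : ℝ)) (p : ℕ → ℝ)
    (hpos : ∀ n, 0 ≤ p n) (hsum : HasSum p 1)
    (hmean : HasSum (fun n : ℕ => (n : ℝ) * p n) μ) :
    W1 p (pstar μ) ≤
      2 * max
        ((∑ n ∈ Finset.range (⌊μ⌋₊ + 1), ((⌊μ⌋₊ : ℝ) + 1 - (n : ℝ)) * p n) -
          ((⌊μ⌋₊ : ℝ) + 1 - μ))
        (∑ n ∈ Finset.range (⌊μ⌋₊ + 1), ((⌊μ⌋₊ : ℝ) - (n : ℝ)) * p n) := by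
  classical
  set k : ℕ := ⌊μ⌋₊ with hk
  -- basic facts about cdf p
  have hcdf_nonneg : ∀ n, 0 ≤ cdf p n := fun n =>
    Finset.sum_nonneg fun m _ => hpos m
  have hcdf_le_one : ∀ n, cdf p n ≤ 1 := fun n =>
    sum_le_hasSum _ (fun m _ => hpos m) hsum
  -- cdf of pstar
  have hpst : ∀ m : ℕ, pstar μ m =
      (if m = k then (1 - μ + (k : ℝ)) else 0) + (if m = k + 1 then (μ - (k : ℝ)) else 0) := by
    intro m
    simp only [pstar, ← hk]
    split_ifs with h1 h2 <;> simp_all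
  have hstar : ∀ n, cdf (pstar μ) n =
      if n < k then 0 else if n = k then 1 - μ + (k : ℝ) else 1 := by
    intro n
    have : cdf (pstar μ) n =
        (if k ∈ Finset.range (n + 1) then (1 - μ + (k : ℝ)) else 0) +
        (if k + 1 ∈ Finset.range (n + 1) then (μ - (k : ℝ)) else 0) := by
      simp only [cdf, hpst, Finset.sum_add_distrib, Finset.sum_ite_eq']
    rw [this]
    rcases lt_trichotomy n k with h | h | h
    · rw [if_neg (by simp [Finset.mem_range]; omega),
        if_neg (by simp [Finset.mem_range]; omega), if_pos h]
      ring
    · subst h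
      rw [if_pos (by simp), if_neg (by simp [Finset.mem_range]),
        if_neg (lt_irrefl _), if_pos rfl]
      ring
    · rw [if_pos (by simp [Finset.mem_range]; omega),
        if_pos (by simp [Finset.mem_range]; omega),
        if_neg (by omega), if_neg (by omega)]
      ring
  -- tail sums
  set T : ℕ → ℝ := fun n => 1 - cdf p n with hT
  have hTn : ∀ n, T n = ∑' m, (if n < m then p m else 0) := by
    intro n
    have h1 := Summable.sum_add_tsum_compl (s := Finset.range (n + 1)) hsum.summable
    rw [hsum.tsum_eq] at h1
    have h2 : ∑' (x : ↑((Finset.range (n + 1) : Finset ℕ) : Set ℕ)ᶜ), p ↑x =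
        ∑' m, (if n < m then p m else 0) := by
      rw [tsum_subtype]
      apply tsum_congr
      intro m
      by_cases hm : n < m
      · have : m ∈ (((Finset.range (n + 1) : Finset ℕ) : Set ℕ))ᶜ := by
          simp [Finset.mem_range]; omega
        rw [Set.indicator_of_mem this, if_pos hm]
      · have : m ∉ (((Finset.range (n + 1) : Finset ℕ) : Set ℕ))ᶜ := by
          simp [Finset.mem_range]; omega
        rw [Set.indicator_of_notMem this, if_neg hm]
    have : cdf p n + ∑' m, (if n < m then p m else 0) = 1 := by
      rw [← h2]; exact h1
    simp only [hT]; linarith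
  -- double sum argument : HasSum T μ
  set F : ℕ × ℕ → ℝ := fun q => if q.2 < q.1 then p q.1 else 0 with hF
  have hFnn : 0 ≤ F := by
    intro q; simp only [hF]
    split_ifs
    · exact hpos _
    · exact le_refl 0
  have hFrow : ∀ m : ℕ, ∀ n, n ∉ Finset.range m → F (m, n) = 0 := by
    intro m n hn
    simp only [hF]
    rw [if_neg]
    simpa [Finset.mem_range] using hn
  have hFrow_sum : ∀ m : ℕ, ∑' n, F (m, n) = (m : ℝ) * p m := by
    intro m
    rw [tsum_eq_sum (hFrow m)]
    have : ∀ n ∈ Finset.range m, F (m, n) = p m := by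
      intro n hn
      simp only [hF]
      rw [if_pos]
      simpa [Finset.mem_range] using hn
    rw [Finset.sum_congr rfl this, Finset.sum_const, Finset.card_range, nsmul_eq_mul]
  have hFsummable : Summable F := by
    rw [summable_prod_of_nonneg hFnn]
    constructor
    · intro m
      exact summable_of_ne_finset_zero (hFrow m)
    · apply Summable.congr hmean.summable
      intro m
      exact (hFrow_sum m).symm
  have hFsum : ∑' m, ∑' n, F (m, n) = μ := by
    rw [tsum_congr hFrow_sum, hmean.tsum_eq]
  have hTsummable : Summable T := by
    have hS := ((summable_prod_of_nonneg (f := fun q : ℕ × ℕ => F q.swap)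
      (fun q => hFnn q.swap)).1 hFsummable.prod_symm).2
    apply Summable.congr hS
    intro n
    rw [hTn n]
    rfl
  have hTtsum : ∑' n, T n = μ := by
    have hcomm := Summable.tsum_comm' (f := fun m n => F (m, n)) hFsummable
      (fun m => summable_of_ne_finset_zero (hFrow m))
      (fun n => by
        have := ((summable_prod_of_nonneg (f := fun q : ℕ × ℕ => F q.swap)
          (fun q => hFnn q.swap)).1 hFsummable.prod_symm).1 n
        exact this)
    rw [tsum_congr hTn]
    calc ∑' n, ∑' m, (if n < m then p m else 0) = ∑' (n) (m), F (m, n) := rfl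
      _ = ∑' (m) (n), F (m, n) := hcomm
      _ = μ := hFsum
  have hTHasSum : HasSum T μ := hTtsum ▸ hTsummable.hasSum
  -- the summand of W1
  set g : ℕ → ℝ := fun n => |cdf p n - cdf (pstar μ) n| with hg
  have hg_tail : ∀ n, k + 1 ≤ n → g n = T n := by
    intro n hn
    simp only [hg, hT, hstar n]
    rw [if_neg (by omega), if_neg (by omega), abs_of_nonpos (by linarith [hcdf_le_one n])]
    ring
  have hgsummable : Summable g := by
    have h1 : Summable (fun n => g n - T n) := by
      apply summable_of_ne_finset_zero (s := Finset.range (k + 1))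
      intro n hn
      rw [hg_tail n (by simpa [Finset.mem_range] using hn)]
      ring
    exact Summable.congr (h1.add hTsummable) (fun n => by ring)
  -- split W1
  have hsplit := Summable.sum_add_tsum_compl (s := Finset.range (k + 1)) hgsummable
  have hsplitT := Summable.sum_add_tsum_compl (s := Finset.range (k + 1)) hTsummable
  rw [hTtsum] at hsplitT
  have htail_eq : ∑' (x : ↑((Finset.range (k + 1) : Finset ℕ) : Set ℕ)ᶜ), g ↑x =
      ∑' (x : ↑((Finset.range (k + 1) : Finset ℕ) : Set ℕ)ᶜ), T ↑x := by
    apply tsum_congr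
    intro x
    have hx : k + 1 ≤ (x : ℕ) := by
      have := x.2
      simp [Finset.mem_range] at this
      omega
    exact hg_tail _ hx
  have hW1 : W1 p (pstar μ) = ∑ n ∈ Finset.range (k + 1), g n +
      (μ - ∑ n ∈ Finset.range (k + 1), T n) := by
    have : W1 p (pstar μ) = ∑' n, g n := rfl
    rw [this, ← hsplit, htail_eq]
    linarith
  -- compute the finite pieces
  set A : ℝ := (∑ n ∈ Finset.range (k + 1), ((k : ℝ) + 1 - (n : ℝ)) * p n) -
      ((k : ℝ) + 1 - μ) with hA
  set B : ℝ := ∑ n ∈ Finset.range (k + 1), ((k : ℝ) - (n : ℝ)) * p n with hB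
  have hsumT : ∑ n ∈ Finset.range (k + 1), T n =
      ((k : ℝ) + 1) - ∑ n ∈ Finset.range (k + 1), ((k : ℝ) + 1 - (n : ℝ)) * p n := by
    have h1 : ∑ n ∈ Finset.range (k + 1), T n =
        ((k : ℝ) + 1) - ∑ n ∈ Finset.range (k + 1), cdf p n := by
      simp only [hT, Finset.sum_sub_distrib, Finset.sum_const, Finset.card_range,
        nsmul_eq_mul, mul_one]
      push_cast
      ring
    rw [h1, sum_cdf p (k + 1)]
    push_cast
    ring
  have hBsum : ∑ n ∈ Finset.range k, g n = B := by
    have h1 : ∀ n ∈ Finset.range k, g n = cdf p n := by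
      intro n hn
      simp only [hg, hstar n]
      rw [if_pos (by simpa [Finset.mem_range] using hn)]
      rw [sub_zero, abs_of_nonneg (hcdf_nonneg n)]
    rw [Finset.sum_congr rfl h1, sum_cdf p k, hB, Finset.sum_range_succ]
    simp
  have hcdfk : cdf p k = (∑ n ∈ Finset.range (k + 1), ((k : ℝ) + 1 - (n : ℝ)) * p n) - B := by
    rw [hB, ← Finset.sum_sub_distrib]
    have : ∀ n ∈ Finset.range (k + 1),
        ((k : ℝ) + 1 - (n : ℝ)) * p n - ((k : ℝ) - (n : ℝ)) * p n = p n := by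
      intro n _; ring
    rw [Finset.sum_congr rfl this]
    rfl
  have hgk : g k = |A - B| := by
    have h1 : cdf (pstar μ) k = 1 - μ + (k : ℝ) := by rw [hstar k]; simp
    simp only [hg]
    rw [h1, hcdfk]
    congr 1
    rw [hA]
    ring
  have hfin : ∑ n ∈ Finset.range (k + 1), g n = B + |A - B| := by
    rw [Finset.sum_range_succ, hBsum, hgk]
  -- assemble
  have : W1 p (pstar μ) = A + B + |A - B| := by
    rw [hW1, hfin, hsumT, hA]
    ring
  rw [this]
  rcases le_total A B with h | h
  · rw [max_eq_right h, abs_of_nonpos (by linarith)]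
    linarith
  · rw [max_eq_left h, abs_of_nonneg (by linarith)]
    linarith
end

section
/- Let μ > 0 be a non-integer real number, let p ∈ V_μ, and set C_μ = min{μ−⌊μ⌋, ⌊μ⌋+1−μ}. Then μ (G[p] − G[p*]) ≥ C_μ · ( ∑_{n ≤ ⌊μ⌋} (⌊μ⌋+1−n) p_n − (⌊μ⌋+1−μ) + ∑_{n ≤ ⌊μ⌋} (⌊μ⌋−n) p_n ), where p* is the shifted Bernoulli distribution with mean μ. -/
lemma hasSum_cut (p : ℕ → ℝ) (n : ℕ) :
    HasSum (fun m => if m ≤ n then p m else 0) (cdf p n) := by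
  have h : ∀ m ∉ Finset.range (n+1), (if m ≤ n then p m else (0:ℝ)) = 0 := by
    intro m hm
    simp only [Finset.mem_range] at hm
    rw [if_neg (by omega)]
  have h2 : HasSum _ _ := hasSum_sum_of_ne_finset_zero h
  convert h2 using 1
  unfold cdf
  refine Finset.sum_congr rfl ?_
  intro m hm
  simp only [Finset.mem_range] at hm
  rw [if_pos (by omega)]

lemma hasSum_tail {p : ℕ → ℝ} (hsum : HasSum p 1) (n : ℕ) :
    HasSum (fun m => if n < m then p m else 0) (1 - cdf p n) := by
  have h : HasSum (fun m => p m - if m ≤ n then p m else 0) (1 - cdf p n) := hsum.sub (hasSum_cut p n)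
  convert h using 1
  funext m
  by_cases hm : m ≤ n
  · rw [if_neg (by omega), if_pos hm]; ring
  · rw [if_pos (by omega), if_neg hm]; ring

lemma cdf_nonneg {p : ℕ → ℝ} (hpos : ∀ n, 0 ≤ p n) (n : ℕ) : 0 ≤ cdf p n :=
  Finset.sum_nonneg fun m _ => hpos m

lemma cdf_le_one {p : ℕ → ℝ} (hpos : ∀ n, 0 ≤ p n) (hsum : HasSum p 1) (n : ℕ) :
    cdf p n ≤ 1 := by
  have h := (hasSum_tail hsum n).nonneg (fun m => by
    show (0:ℝ) ≤ if n < m then p m else 0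
    split_ifs
    exacts [hpos m, le_rfl])
  linarith

lemma cdf_mono {p : ℕ → ℝ} (hpos : ∀ n, 0 ≤ p n) {m n : ℕ} (h : m ≤ n) :
    cdf p m ≤ cdf p n := by
  apply Finset.sum_le_sum_of_subset_of_nonneg
  · exact Finset.range_subset_range.mpr (by omega)
  · exact fun i _ _ => hpos i

lemma fnonneg {p : ℕ → ℝ} (hpos : ∀ n, 0 ≤ p n) :
    (0:(ℕ×ℕ)→ℝ) ≤ fun x : ℕ × ℕ => if x.1 < x.2 then p x.2 else 0 := by
  intro x
  show (0:ℝ) ≤ if x.1 < x.2 then p x.2 else 0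
  split_ifs
  exacts [hpos x.2, le_rfl]

lemma meanTail {p : ℕ → ℝ} {μ : ℝ} (hpos : ∀ n, 0 ≤ p n) (hsum : HasSum p 1)
    (hmean : HasSum (fun n : ℕ => (n : ℝ) * p n) μ) :
    HasSum (fun n => 1 - cdf p n) μ := by
  set f : ℕ × ℕ → ℝ := fun x => if x.1 < x.2 then p x.2 else 0 with hf
  have h1 : ∀ n, HasSum (fun m => f (n, m)) (1 - cdf p n) := fun n => hasSum_tail hsum n
  have h2 : ∀ m, HasSum (fun n => f (n, m)) ((m:ℝ) * p m) := by
    intro m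
    have h : ∀ n ∉ Finset.range m, f (n, m) = 0 := by
      intro n hn; simp only [Finset.mem_range] at hn
      show (if n < m then p m else 0) = 0
      rw [if_neg (by omega)]
    have h2 : HasSum _ _ := hasSum_sum_of_ne_finset_zero h
    convert h2 using 1
    have he : ∀ n ∈ Finset.range m, f (n, m) = p m := by
      intro n hn; simp only [Finset.mem_range] at hn
      show (if n < m then p m else 0) = p m
      rw [if_pos hn]
    rw [Finset.sum_congr rfl he, Finset.sum_const, Finset.card_range, nsmul_eq_mul]
  have hnn : (0:(ℕ×ℕ)→ℝ) ≤ f := fnonneg hpos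
  have hg : Summable (fun x : ℕ × ℕ => f x.swap) := by
    refine (summable_prod_of_nonneg (fun x => hnn x.swap)).mpr ⟨fun m => (h2 m).summable, ?_⟩
    have he : (fun m => ∑' n, f ((m, n).swap)) = fun m : ℕ => (m:ℝ) * p m := by
      funext m; exact (h2 m).tsum_eq
    exact he ▸ hmean.summable
  have hfs : Summable f := hg.prod_symm
  have ht : ∑' x, f x = μ := by
    have e1 : ∑' x : ℕ × ℕ, f x.swap = ∑' x, f x := (Equiv.prodComm ℕ ℕ).tsum_eq f
    rw [← e1, Summable.tsum_prod' hg (fun m => (h2 m).summable)]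
    have e2 : ∀ m : ℕ, ∑' n, f ((m, n).swap) = (m:ℝ) * p m := fun m => (h2 m).tsum_eq
    rw [tsum_congr e2]
    exact hmean.tsum_eq
  have hsum2 : Summable fun n => 1 - cdf p n := by
    have h := ((summable_prod_of_nonneg hnn).mp hfs).2
    have he : (fun n => ∑' m, f (n, m)) = fun n => 1 - cdf p n := by
      funext n; exact (h1 n).tsum_eq
    exact he ▸ h
  refine hsum2.hasSum_iff.mpr ?_
  rw [← ht, Summable.tsum_prod' hfs (fun n => (h1 n).summable)]
  exact (tsum_congr fun n => (h1 n).tsum_eq).symm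
noncomputable def eind (i j n : ℕ) : ℝ := if min i j ≤ n ∧ n < max i j then 1 else 0

lemma eind_nonneg (i j n : ℕ) : 0 ≤ eind i j n := by
  unfold eind; split_ifs; exacts [zero_le_one, le_rfl]

lemma hasSum_eind (i j : ℕ) : HasSum (eind i j) |(i:ℝ) - (j:ℝ)| := by
  have h : ∀ n ∉ Finset.Ico (min i j) (max i j), eind i j n = 0 := by
    intro n hn
    simp only [Finset.mem_Ico, not_and, not_lt] at hn
    unfold eind
    rw [if_neg]
    rintro ⟨h1, h2⟩
    exact absurd (hn h1) (by omega)
  have h2 : HasSum _ _ := hasSum_sum_of_ne_finset_zero h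
  have hval : ∑ n ∈ Finset.Ico (min i j) (max i j), eind i j n = ((max i j - min i j : ℕ) : ℝ) := by
    have he : ∀ n ∈ Finset.Ico (min i j) (max i j), eind i j n = 1 := by
      intro n hn
      simp only [Finset.mem_Ico] at hn
      unfold eind
      rw [if_pos hn]
    rw [Finset.sum_congr rfl he, Finset.sum_const, Nat.card_Ico, nsmul_eq_mul, mul_one]
  rw [hval] at h2
  convert h2 using 1
  rcases le_total i j with h'|h'
  · rw [abs_of_nonpos (by simp [sub_nonpos, Nat.cast_le, h'])]
    rw [max_eq_right h', min_eq_left h', Nat.cast_sub h']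
    ring
  · rw [abs_of_nonneg (by simp [sub_nonneg, Nat.cast_le, h'])]
    rw [max_eq_left h', min_eq_right h', Nat.cast_sub h']

lemma master {p : ℕ → ℝ} {μ : ℝ} (hpos : ∀ n, 0 ≤ p n) (hsum : HasSum p 1)
    (hmean : HasSum (fun n : ℕ => (n : ℝ) * p n) μ) :
    ∑' i : ℕ, ∑' j : ℕ, |(i:ℝ) - (j:ℝ)| * p i * p j
      = 2 * ∑' n, cdf p n * (1 - cdf p n) := by
  have hmaj : Summable (fun x : ℕ × ℕ => (x.1:ℝ) * p x.1 * p x.2 + p x.1 * ((x.2:ℝ) * p x.2)) := by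
    have h1 := hmean.summable.mul_of_nonneg hsum.summable
      (fun n => mul_nonneg (Nat.cast_nonneg n) (hpos n)) hpos
    have h2 := hsum.summable.mul_of_nonneg hmean.summable hpos
      (fun n => mul_nonneg (Nat.cast_nonneg n) (hpos n))
    exact h1.add h2
  have habs2 : Summable (fun x : ℕ × ℕ => |(x.1:ℝ) - x.2| * (p x.1 * p x.2)) := by
    refine Summable.of_nonneg_of_le (fun x => mul_nonneg (abs_nonneg _)
      (mul_nonneg (hpos _) (hpos _))) (fun x => ?_) hmaj
    have hle : |(x.1:ℝ) - x.2| ≤ (x.1:ℝ) + x.2 := by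
      have h1 : (0:ℝ) ≤ (x.1:ℝ) := Nat.cast_nonneg _
      have h2 : (0:ℝ) ≤ (x.2:ℝ) := Nat.cast_nonneg _
      rw [abs_sub_le_iff]
      constructor <;> linarith
    calc |(x.1:ℝ) - x.2| * (p x.1 * p x.2) ≤ ((x.1:ℝ) + x.2) * (p x.1 * p x.2) :=
          mul_le_mul_of_nonneg_right hle (mul_nonneg (hpos _) (hpos _))
      _ = (x.1:ℝ) * p x.1 * p x.2 + p x.1 * ((x.2:ℝ) * p x.2) := by ring
  have hA : ∀ x : ℕ × ℕ, HasSum (fun n => eind x.1 x.2 n * (p x.1 * p x.2))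
      (|(x.1:ℝ) - x.2| * (p x.1 * p x.2)) := fun x => (hasSum_eind x.1 x.2).mul_right _
  have h3 : Summable (fun y : (ℕ × ℕ) × ℕ => eind y.1.1 y.1.2 y.2 * (p y.1.1 * p y.1.2)) := by
    refine (summable_prod_of_nonneg (fun y => mul_nonneg (eind_nonneg _ _ _)
      (mul_nonneg (hpos _) (hpos _)))).mpr ⟨fun x => (hA x).summable, ?_⟩
    have he : (fun x : ℕ × ℕ => ∑' n, eind x.1 x.2 n * (p x.1 * p x.2))
        = fun x : ℕ × ℕ => |(x.1:ℝ) - x.2| * (p x.1 * p x.2) := by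
      funext x; exact (hA x).tsum_eq
    exact he ▸ habs2
  have hB : ∀ n : ℕ, HasSum (fun x : ℕ × ℕ => eind x.1 x.2 n * (p x.1 * p x.2))
      (2 * (cdf p n * (1 - cdf p n))) := by
    intro n
    set c : ℕ → ℝ := fun m => if m ≤ n then p m else 0 with hcdef
    set t : ℕ → ℝ := fun m => if n < m then p m else 0 with htdef
    have hcpos : ∀ m, 0 ≤ c m := fun m => by
      show (0:ℝ) ≤ if m ≤ n then p m else 0; split_ifs; exacts [hpos m, le_rfl]
    have htpos : ∀ m, 0 ≤ t m := fun m => by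
      show (0:ℝ) ≤ if n < m then p m else 0; split_ifs; exacts [hpos m, le_rfl]
    have hc : HasSum c (cdf p n) := hasSum_cut p n
    have ht : HasSum t (1 - cdf p n) := hasSum_tail hsum n
    have h1 : HasSum (fun x : ℕ × ℕ => c x.1 * t x.2) (cdf p n * (1 - cdf p n)) :=
      hc.mul ht (hc.summable.mul_of_nonneg ht.summable hcpos htpos)
    have h2 : HasSum (fun x : ℕ × ℕ => t x.1 * c x.2) ((1 - cdf p n) * cdf p n) :=
      ht.mul hc (ht.summable.mul_of_nonneg hc.summable htpos hcpos)
    have hadd := h1.add h2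
    have heq : (fun x : ℕ × ℕ => c x.1 * t x.2 + t x.1 * c x.2)
        = fun x : ℕ × ℕ => eind x.1 x.2 n * (p x.1 * p x.2) := by
      funext x
      show (if x.1 ≤ n then p x.1 else 0) * (if n < x.2 then p x.2 else 0)
          + (if n < x.1 then p x.1 else 0) * (if x.2 ≤ n then p x.2 else 0)
          = eind x.1 x.2 n * (p x.1 * p x.2)
      unfold eind
      rcases le_or_gt x.1 n with hx1 | hx1 <;> rcases le_or_gt x.2 n with hx2 | hx2 <;>
        split_ifs with h <;> first | (exfalso; omega) | ring1
    rw [heq] at hadd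
    convert hadd using 1
    ring
  calc ∑' i : ℕ, ∑' j : ℕ, |(i:ℝ) - (j:ℝ)| * p i * p j
      = ∑' i : ℕ, ∑' j : ℕ, |(i:ℝ) - (j:ℝ)| * (p i * p j) := by
        refine tsum_congr fun i => tsum_congr fun j => by ring
    _ = ∑' x : ℕ × ℕ, |(x.1:ℝ) - x.2| * (p x.1 * p x.2) :=
        (Summable.tsum_prod' habs2 habs2.prod_factor).symm
    _ = ∑' x : ℕ × ℕ, ∑' n : ℕ, eind x.1 x.2 n * (p x.1 * p x.2) :=
        tsum_congr fun x => (hA x).tsum_eq.symm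
    _ = ∑' n : ℕ, ∑' x : ℕ × ℕ, eind x.1 x.2 n * (p x.1 * p x.2) := Eq.symm <| Summable.tsum_comm (f := fun (x : ℕ × ℕ) (n : ℕ) => eind x.1 x.2 n * (p x.1 * p x.2)) h3
    _ = ∑' n : ℕ, 2 * (cdf p n * (1 - cdf p n)) := tsum_congr fun n => (hB n).tsum_eq
    _ = 2 * ∑' n : ℕ, cdf p n * (1 - cdf p n) := tsum_mul_left

lemma pstar_vanish {μ : ℝ} : ∀ n ∉ ({⌊μ⌋₊, ⌊μ⌋₊ + 1} : Finset ℕ), pstar μ n = 0 := by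
  intro n hn
  simp only [Finset.mem_insert, Finset.mem_singleton] at hn
  push_neg at hn
  unfold pstar
  rw [if_neg hn.1, if_neg hn.2]

lemma pstar_pos {μ : ℝ} (hμ : 0 < μ) : ∀ n, 0 ≤ pstar μ n := by
  have h1 : (⌊μ⌋₊ : ℝ) ≤ μ := Nat.floor_le hμ.le
  have h2 : μ < ⌊μ⌋₊ + 1 := Nat.lt_floor_add_one μ
  intro n
  unfold pstar
  split_ifs <;> linarith

lemma pstar_hasSum (μ : ℝ) : HasSum (pstar μ) 1 := by
  have h2 : HasSum _ _ := hasSum_sum_of_ne_finset_zero (pstar_vanish (μ := μ))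
  convert h2 using 1
  rw [Finset.sum_insert (by simp), Finset.sum_singleton]
  unfold pstar
  rw [if_pos rfl, if_neg (by omega), if_pos rfl]
  ring

lemma pstar_mean (μ : ℝ) : HasSum (fun n : ℕ => (n : ℝ) * pstar μ n) μ := by
  have h : ∀ n ∉ ({⌊μ⌋₊, ⌊μ⌋₊ + 1} : Finset ℕ), (n : ℝ) * pstar μ n = 0 := by
    intro n hn; rw [pstar_vanish n hn, mul_zero]
  have h2 : HasSum _ _ := hasSum_sum_of_ne_finset_zero h
  convert h2 using 1
  rw [Finset.sum_insert (by simp), Finset.sum_singleton]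
  unfold pstar
  rw [if_pos rfl, if_neg (by omega), if_pos rfl]
  push_cast
  ring

lemma cdf_pstar_lt {μ : ℝ} {n : ℕ} (hn : n < ⌊μ⌋₊) : cdf (pstar μ) n = 0 := by
  apply Finset.sum_eq_zero
  intro m hm
  simp only [Finset.mem_range] at hm
  apply pstar_vanish
  simp only [Finset.mem_insert, Finset.mem_singleton]
  omega

lemma cdf_pstar_k (μ : ℝ) : cdf (pstar μ) ⌊μ⌋₊ = 1 - μ + ⌊μ⌋₊ := by
  unfold cdf
  rw [Finset.sum_eq_single_of_mem ⌊μ⌋₊ (by simp) (fun m hm hne => by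
    apply pstar_vanish
    simp only [Finset.mem_range] at hm
    simp only [Finset.mem_insert, Finset.mem_singleton]
    omega)]
  unfold pstar
  rw [if_pos rfl]

lemma cdf_pstar_gt {μ : ℝ} {n : ℕ} (hn : ⌊μ⌋₊ < n) : cdf (pstar μ) n = 1 := by
  unfold cdf
  rw [← Finset.sum_subset (s₁ := ({⌊μ⌋₊, ⌊μ⌋₊ + 1} : Finset ℕ))
    (by intro m hm; simp only [Finset.mem_insert, Finset.mem_singleton] at hm
        simp only [Finset.mem_range]; omega)
    (fun m _ hm => pstar_vanish m hm)]
  rw [Finset.sum_insert (by simp), Finset.sum_singleton]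
  unfold pstar
  rw [if_pos rfl, if_neg (by omega), if_pos rfl]
  ring

lemma gtsum_pstar (μ : ℝ) :
    ∑' n, cdf (pstar μ) n * (1 - cdf (pstar μ) n) = (1 - μ + ⌊μ⌋₊) * (μ - ⌊μ⌋₊) := by
  rw [tsum_eq_single ⌊μ⌋₊ (fun n hn => ?_)]
  · rw [cdf_pstar_k]; ring
  · rcases Nat.lt_or_ge n ⌊μ⌋₊ with h | h
    · rw [cdf_pstar_lt h, zero_mul]
    · rw [cdf_pstar_gt (by omega)]; ring

lemma sumcdf (p : ℕ → ℝ) (N : ℕ) :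
    ∑ n ∈ Finset.range N, cdf p n = ∑ m ∈ Finset.range N, ((N : ℝ) - m) * p m := by
  induction N with
  | zero => simp
  | succ N ih =>
    rw [Finset.sum_range_succ, ih]
    have h : ∀ m ∈ Finset.range (N + 1), (((N + 1 : ℕ) : ℝ) - (m : ℝ)) * p m
        = ((N : ℝ) - m) * p m + p m := by
      intro m _; push_cast; ring
    rw [Finset.sum_congr rfl h, Finset.sum_add_distrib,
      Finset.sum_range_succ (f := fun m => ((N : ℝ) - m) * p m)]
    unfold cdf
    simp only [sub_self, zero_mul, add_zero]

lemma mu_gini {p : ℕ → ℝ} {μ ν : ℝ} (hν : ν ≠ 0) (hpos : ∀ n, 0 ≤ p n) (hsum : HasSum p 1)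
    (hmean : HasSum (fun n : ℕ => (n : ℝ) * p n) μ) :
    ν * Gini ν p = ∑' n, cdf p n * (1 - cdf p n) := by
  unfold Gini
  rw [master hpos hsum hmean]
  field_simp


set_option maxHeartbeats 2000000 in
theorem stmt_15 (μ : ℝ) (hμ : 0 < μ) (hni : ∀ n : ℕ, μ ≠ (n : ℝ)) (p : ℕ → ℝ)
    (hpos : ∀ n, 0 ≤ p n) (hsum : HasSum p 1)
    (hmean : HasSum (fun n : ℕ => (n : ℝ) * p n) μ) :
    μ * (Gini μ p - Gini μ (pstar μ)) ≥
      min (μ - (⌊μ⌋₊ : ℝ)) ((⌊μ⌋₊ : ℝ) + 1 - μ) *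
        (((∑ n ∈ Finset.range (⌊μ⌋₊ + 1), ((⌊μ⌋₊ : ℝ) + 1 - (n : ℝ)) * p n) -
            ((⌊μ⌋₊ : ℝ) + 1 - μ)) +
          ∑ n ∈ Finset.range (⌊μ⌋₊ + 1), ((⌊μ⌋₊ : ℝ) - (n : ℝ)) * p n) := by
  have hμ0 : μ ≠ 0 := ne_of_gt hμ
  set k := ⌊μ⌋₊ with hk
  have hfl : (k : ℝ) ≤ μ := Nat.floor_le hμ.le
  have hfu : μ < (k : ℝ) + 1 := Nat.lt_floor_add_one μ
  have hG1 : μ * Gini μ p = ∑' n, cdf p n * (1 - cdf p n) := mu_gini hμ0 hpos hsum hmean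
  have hG2 : μ * Gini μ (pstar μ) = (1 - μ + (k : ℝ)) * (μ - (k : ℝ)) := by
    rw [mu_gini hμ0 (pstar_pos hμ) (pstar_hasSum μ) (pstar_mean μ), gtsum_pstar]
  set F := cdf p with hF
  set T := ∑ n ∈ Finset.range k, F n with hT
  set f := F k with hfdef
  have hs1 : ∑ n ∈ Finset.range (k + 1), ((k : ℝ) + 1 - (n : ℝ)) * p n = T + f := by
    have h := sumcdf p (k + 1)
    have h2 : ∑ n ∈ Finset.range (k + 1), (((k + 1 : ℕ) : ℝ) - (n : ℝ)) * p n
        = ∑ n ∈ Finset.range (k + 1), ((k : ℝ) + 1 - (n : ℝ)) * p n := by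
      refine Finset.sum_congr rfl fun n _ => ?_
      push_cast; ring
    rw [h2] at h
    rw [← h, Finset.sum_range_succ]
  have hs2 : ∑ n ∈ Finset.range (k + 1), ((k : ℝ) - (n : ℝ)) * p n = T := by
    rw [Finset.sum_range_succ, sub_self, zero_mul, add_zero, ← sumcdf p k]
  have hFle : ∀ n, F n ≤ 1 := cdf_le_one hpos hsum
  have hFnn : ∀ n, 0 ≤ F n := cdf_nonneg hpos
  have hTail : HasSum (fun n => 1 - F n) μ := meanTail hpos hsum hmean
  have hGsum : Summable (fun n => F n * (1 - F n)) := by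
    refine Summable.of_nonneg_of_le (fun n => mul_nonneg (hFnn n) (by linarith [hFle n]))
      (fun n => ?_) hTail.summable
    nlinarith [hFnn n, hFle n]
  have hsplit1 := Summable.sum_add_tsum_nat_add (f := fun n => F n * (1 - F n)) (k + 1) hGsum
  have hsplit2 := Summable.sum_add_tsum_nat_add (f := fun n => 1 - F n) (k + 1) hTail.summable
  rw [hTail.tsum_eq] at hsplit2
  set S := ∑' n : ℕ, (1 - F (n + (k + 1))) with hSdef
  have hS0 : 0 ≤ S := tsum_nonneg fun n => by linarith [hFle (n + (k + 1))]
  have hshift2 : Summable fun n : ℕ => 1 - F (n + (k + 1)) :=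
    (summable_nat_add_iff (f := fun n => 1 - F n) (k + 1)).mpr hTail.summable
  have hshift1 : Summable fun n : ℕ => F (n + (k + 1)) * (1 - F (n + (k + 1))) :=
    (summable_nat_add_iff (f := fun n => F n * (1 - F n)) (k + 1)).mpr hGsum
  have htailLB : f * S ≤ ∑' n : ℕ, F (n + (k + 1)) * (1 - F (n + (k + 1))) := by
    rw [hSdef, ← tsum_mul_left]
    refine Summable.tsum_le_tsum (fun n => ?_) (hshift2.mul_left f) hshift1
    have h1 : f ≤ F (n + (k + 1)) := cdf_mono hpos (by omega)
    have h2 : 0 ≤ 1 - F (n + (k + 1)) := by linarith [hFle (n + (k + 1))]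
    nlinarith
  have hheadLB : (1 - f) * (T + f) ≤ ∑ n ∈ Finset.range (k + 1), F n * (1 - F n) := by
    have he : T + f = ∑ n ∈ Finset.range (k + 1), F n := (Finset.sum_range_succ F k).symm
    rw [he, Finset.mul_sum]
    refine Finset.sum_le_sum fun n hn => ?_
    simp only [Finset.mem_range] at hn
    have h1 : F n ≤ f := cdf_mono hpos (by omega)
    nlinarith [hFnn n]
  have hhead2 : ∑ n ∈ Finset.range (k + 1), (1 - F n) = ((k : ℝ) + 1) - (T + f) := by
    rw [Finset.sum_sub_distrib, Finset.sum_const, Finset.card_range, Finset.sum_range_succ F k]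
    push_cast; ring
  have hSval : S = μ - (((k : ℝ) + 1) - (T + f)) := by
    rw [hhead2] at hsplit2; linarith
  have hMain : (1 - f) * (T + f) + f * S ≤ ∑' n : ℕ, F n * (1 - F n) := by
    rw [← hsplit1]
    exact add_le_add hheadLB htailLB
  have hT0 : 0 ≤ T := Finset.sum_nonneg fun n _ => hFnn n
  have hgoal : μ * (Gini μ p - Gini μ (pstar μ))
      = (∑' n, F n * (1 - F n)) - (1 - μ + (k : ℝ)) * (μ - (k : ℝ)) := by
    rw [mul_sub, hG1, hG2]
  rw [ge_iff_le, hgoal, hs1, hs2]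
  rcases le_total (μ - (k : ℝ)) ((k : ℝ) + 1 - μ) with hc | hc
  · rw [min_eq_left hc]
    nlinarith [mul_nonneg hT0 (by linarith : (0:ℝ) ≤ ((k : ℝ) + 1 - μ) - (μ - (k : ℝ))),
      hMain, hSval]
  · rw [min_eq_right hc]
    nlinarith [mul_nonneg hS0 (by linarith : (0:ℝ) ≤ (μ - (k : ℝ)) - ((k : ℝ) + 1 - μ)),
      hMain, hSval]
end
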